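/- Every root of the polynomial λ^{l−1} + p·(λ^{l−2} + λ^{l−3} + ⋯ + λ + 1) lies strictly inside the unit disk: if λ ∈ ℂ satisfies λ^{l−1} + p·Σ_{i=0}^{l−2} λ^i = 0, then |λ| < 1. -/

import Mathlib

/-- Fix `p` with `0 < p < 1` and an integer `l ≥ 2`.  Every
root of `λ^{l−1} + p·(λ^{l−2} + ⋯ + λ + 1)` lies strictly inside the unit
disk: if `λ ∈ ℂ` satisfies `λ^{l−1} + p·Σ_{i=0}^{l−2} λ^i = 0`, then
`|λ| < 1`. -/
theorem stmt7 (p : ℝ) (hp0 : 0 < p) (hp1 : p < 1) (l : ℕ) (hl : 2 ≤ l) :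
    ∀ lam : ℂ,
      lam ^ (l - 1) + (p : ℂ) * ∑ i ∈ Finset.range (l - 1), lam ^ i = 0 →
        ‖lam‖ < 1 := by
  intro lam h
  set n := l - 1 with hn_def
  have hn : 1 ≤ n := by omega
  by_contra hcon
  push_neg at hcon
  by_cases h1 : lam = 1
  · subst h1
    simp at h
    have hre := congrArg Complex.re h
    simp at hre
    have hn1 : (1:ℝ) ≤ (n:ℝ) := by exact_mod_cast hn
    nlinarith
  · have E : lam ^ (n+1) = (1 - (p:ℂ)) * lam ^ n + p := by
      linear_combination (lam - 1) * h - (p:ℂ) * geom_sum_mul lam n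
    set r := ‖lam‖ with hr_def
    have habsp : ‖(1:ℂ) - (p:ℂ)‖ = 1 - p := by
      rw [show (1:ℂ) - (p:ℂ) = ((1-p:ℝ):ℂ) by push_cast; ring,
        Complex.norm_real, Real.norm_eq_abs, abs_of_pos (by linarith)]
    have hineq : r ^ (n+1) ≤ (1-p) * r ^ n + p := by
      calc r ^ (n+1) = ‖lam ^ (n+1)‖ := by rw [norm_pow]
        _ = ‖(1 - (p:ℂ)) * lam ^ n + p‖ := by rw [E]
        _ ≤ ‖(1 - (p:ℂ)) * lam ^ n‖ + ‖(p:ℂ)‖ :=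
            norm_add_le _ _
        _ = (1-p) * r ^ n + p := by
            rw [norm_mul, habsp, norm_pow, Complex.norm_real, Real.norm_eq_abs, abs_of_pos hp0]
    rcases eq_or_lt_of_le hcon with hr1 | hr1
    · -- r = 1
      have hz : Complex.normSq (lam ^ n) = 1 := by
        rw [← Complex.sq_norm, norm_pow, ← hr_def, ← hr1]; simp
      have h2 : Complex.normSq ((1 - (p:ℂ)) * lam ^ n + p) = 1 := by
        rw [← E, ← Complex.sq_norm, norm_pow, ← hr_def, ← hr1]; simp
      simp [Complex.normSq_apply, Complex.add_re, Complex.add_im, Complex.mul_re,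
        Complex.mul_im, Complex.sub_re, Complex.sub_im] at hz h2
      have key : (2*p*(1-p)) * ((lam ^ n).re - 1) = 0 := by
        linear_combination h2 - (1-p)^2 * hz
      have hre : (lam ^ n).re = 1 := by
        rcases mul_eq_zero.mp key with h4 | h4
        · exfalso; nlinarith
        · linarith
      have him : (lam ^ n).im = 0 := by
        have h5 : (lam ^ n).im * (lam ^ n).im = 0 := by nlinarith
        exact mul_self_eq_zero.mp h5
      have hz1 : lam ^ n = 1 := Complex.ext (by simp [hre]) (by simp [him])
      have hlam : lam = 1 := by
        have E' : lam ^ n * lam = (1 - (p:ℂ)) * lam ^ n + p := by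
          rw [← pow_succ]; exact E
        rw [hz1] at E'
        simpa using E'
      exact h1 hlam
    · -- r > 1
      have h1n : (1:ℝ) ≤ r ^ n := by
        calc (1:ℝ) = 1 ^ n := (one_pow n).symm
          _ ≤ r ^ n := pow_le_pow_left₀ (by norm_num) (le_of_lt hr1) n
      nlinarith [pow_succ r n, hineq, h1n]
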